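/- For every r ≥ 1 and n ∈ ℕ, the order-r q-Frobenius–Euler polynomial expands in the order-1 basis as H^{(r)}_{n,q}(x|λ) = ∑_{k=0}^{n} C(n,k)_q · H^{(r−1)}_{n−k,q}(λ) · H^{(1)}_{k,q}(x|λ), where for r = 1 one uses H^{(0)}_{n−k,q}(λ) = δ_{0,n−k}. -/

import Mathlib

open Finset Polynomial

/-- The `q`-integer `[n]_q = (1 - q^n)/(1 - q)` viewed in `ℂ`. -/
noncomputable def qInt (q : ℝ) (n : ℕ) : ℂ := (1 - (q : ℂ) ^ n) / (1 - (q : ℂ))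

/-- The `q`-factorial `[n]_q! = ∏_{j=1}^n [j]_q`. -/
noncomputable def qFact (q : ℝ) (n : ℕ) : ℂ := ∏ j ∈ Finset.range n, qInt q (j + 1)

/-- The `q`-binomial coefficient `[n]_q!/([k]_q! [n-k]_q!)`. -/
noncomputable def qBinom (q : ℝ) (n k : ℕ) : ℂ := qFact q n / (qFact q k * qFact q (n - k))

/-- The formal `q`-exponential `e_q(t) = ∑ t^n/[n]_q!` in `ℂ[x][[t]]`. -/
noncomputable def qExp (q : ℝ) : PowerSeries (Polynomial ℂ) :=
  PowerSeries.mk fun n => Polynomial.C (1 / qFact q n)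

/-- The formal series `e_q(xt) = ∑ x^n t^n/[n]_q!` in `ℂ[x][[t]]`. -/
noncomputable def qExpX (q : ℝ) : PowerSeries (Polynomial ℂ) :=
  PowerSeries.mk fun n => Polynomial.C (1 / qFact q n) * Polynomial.X ^ n

/-- `H : ℕ → ℂ[x]` is the family of order-`r` `q`-Frobenius-Euler polynomials
`H^{(r)}_{n,q}(x|λ)`:
`(∑ H_n t^n/[n]_q!) ⬝ (e_q(t) - λ)^r = (1 - λ)^r e_q(xt)` in `ℂ[x][[t]]`. -/
def IsqFrobeniusEulerOrder (q : ℝ) (lam : ℂ) (r : ℕ) (H : ℕ → Polynomial ℂ) : Prop :=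
  (PowerSeries.mk fun n => Polynomial.C (1 / qFact q n) * H n) *
      (qExp q - PowerSeries.C (Polynomial.C lam)) ^ r =
    PowerSeries.C (Polynomial.C ((1 - lam) ^ r)) * qExpX q

lemma qFact_ne_zero {q : ℝ} (hq0 : 0 < q) (hq1 : q < 1) (n : ℕ) : qFact q n ≠ 0 := by
  unfold qFact
  apply Finset.prod_ne_zero_iff.mpr
  intro j _
  unfold qInt
  have hd : (1 : ℂ) - (q : ℂ) ≠ 0 := by
    rw [sub_ne_zero]
    exact_mod_cast ne_of_gt hq1
  apply div_ne_zero _ hd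
  rw [sub_ne_zero]
  have h : q ^ (j+1) < 1 := pow_lt_one₀ hq0.le hq1 (Nat.succ_ne_zero j)
  intro hc
  have : ((q ^ (j+1) : ℝ) : ℂ) = ((1:ℝ) : ℂ) := by push_cast; exact hc.symm
  exact absurd (Complex.ofReal_injective this) h.ne

lemma qFact_zero (q : ℝ) : qFact q 0 = 1 := by simp [qFact]

/-- For `r ≥ 1`,
`H^{(r)}_{n,q}(x|λ) = ∑_{k=0}^n C(n,k)_q H^{(r-1)}_{n-k,q}(λ) H^{(1)}_{k,q}(x|λ)`. -/
theorem qFrobeniusEulerOrder_expansion_in_order_one_basis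
    (q : ℝ) (hq0 : 0 < q) (hq1 : q < 1) (lam : ℂ) (hlam : lam ≠ 1)
    (r : ℕ) (hr : 1 ≤ r)
    (Hr : ℕ → Polynomial ℂ) (hHr : IsqFrobeniusEulerOrder q lam r Hr)
    (Hrm : ℕ → Polynomial ℂ) (hHrm : IsqFrobeniusEulerOrder q lam (r - 1) Hrm)
    (H1 : ℕ → Polynomial ℂ) (hH1 : IsqFrobeniusEulerOrder q lam 1 H1) (n : ℕ) :
    Hr n = ∑ k ∈ Finset.range (n + 1),
      Polynomial.C (qBinom q n k * (Hrm (n - k)).eval 0) * H1 k := by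
  classical
  have hfact := qFact_ne_zero hq0 hq1
  unfold IsqFrobeniusEulerOrder at hHr hHrm hH1
  set A : PowerSeries (Polynomial ℂ) :=
    qExp q - PowerSeries.C (Polynomial.C lam) with hAdef
  set φ : Polynomial ℂ →+* Polynomial ℂ :=
    Polynomial.C.comp (Polynomial.evalRingHom 0) with hφdef
  set G : PowerSeries (Polynomial ℂ) :=
    PowerSeries.mk fun m => Polynomial.C (1 / qFact q m * (Hrm m).eval 0) with hGdef
  have hmapmk : PowerSeries.map φ
      (PowerSeries.mk fun m => Polynomial.C (1 / qFact q m) * Hrm m) = G := by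
    ext m
    simp [hGdef, hφdef, PowerSeries.coeff_map, mul_comm]
  have hmapA : PowerSeries.map φ A = A := by
    ext m
    simp [hAdef, qExp, hφdef, PowerSeries.coeff_map, PowerSeries.coeff_C, apply_ite]
  have hmapX : PowerSeries.map φ (qExpX q) = 1 := by
    ext m
    cases m with
    | zero => simp [qExpX, hφdef, PowerSeries.coeff_map, qFact_zero]
    | succ m => simp [qExpX, hφdef, PowerSeries.coeff_map]
  have hG : G * A ^ (r - 1) =
      PowerSeries.C (Polynomial.C ((1 - lam) ^ (r - 1))) := by
    have h := congrArg (PowerSeries.map φ) hHrm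
    rw [map_mul, map_pow, hmapmk, hmapA, map_mul, hmapX, mul_one,
      PowerSeries.map_C] at h
    simpa [hφdef] using h
  have hlam' : (1 : ℂ) - lam ≠ 0 := sub_ne_zero.mpr (Ne.symm hlam)
  have hcA : PowerSeries.constantCoeff A = Polynomial.C (1 - lam) := by
    simp [hAdef, qExp, qFact_zero, Polynomial.C_sub]
  have hAne : A ≠ 0 := by
    intro h
    rw [h, map_zero] at hcA
    exact hlam' (Polynomial.C_eq_zero.mp hcA.symm)
  have hkey : (PowerSeries.mk fun m => Polynomial.C (1 / qFact q m) * Hr m) =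
      G * (PowerSeries.mk fun m => Polynomial.C (1 / qFact q m) * H1 m) := by
    apply mul_right_cancel₀ (pow_ne_zero r hAne)
    rw [hHr]
    have hrr : r = (r - 1) + 1 := (Nat.succ_pred_eq_of_pos hr).symm
    calc PowerSeries.C (Polynomial.C ((1 - lam) ^ r)) * qExpX q
        = PowerSeries.C (Polynomial.C ((1 - lam) ^ (r-1))) *
            (PowerSeries.C (Polynomial.C ((1 - lam) ^ 1)) * qExpX q) := by
          rw [← mul_assoc, ← map_mul, ← Polynomial.C_mul, ← pow_add]
          rw [show r - 1 + 1 = r from (Nat.succ_pred_eq_of_pos hr)]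
      _ = (G * A ^ (r-1)) *
            ((PowerSeries.mk fun m => Polynomial.C (1 / qFact q m) * H1 m) * A ^ 1) := by
          rw [hG, hH1]
      _ = G * (PowerSeries.mk fun m => Polynomial.C (1 / qFact q m) * H1 m) * A ^ r := by
          rw [pow_one, mul_mul_mul_comm, ← pow_succ,
            show r - 1 + 1 = r from Nat.succ_pred_eq_of_pos hr]
  have hcoeff := congrArg (PowerSeries.coeff n) hkey
  rw [PowerSeries.coeff_mk, PowerSeries.coeff_mul,
    Finset.Nat.sum_antidiagonal_eq_sum_range_succ_mk] at hcoeff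
  simp only [PowerSeries.coeff_mk] at hcoeff
  have hmul := congrArg (fun p => Polynomial.C (qFact q n) * p) hcoeff
  simp only [Finset.mul_sum, ← mul_assoc, ← Polynomial.C_mul] at hmul
  have hL : qFact q n * (1 / qFact q n) = 1 := by
    rw [mul_one_div]; exact div_self (hfact n)
  rw [hL, Polynomial.C_1, one_mul] at hmul
  rw [hmul, ← Finset.sum_range_reflect]
  apply Finset.sum_congr rfl
  intro k hk
  have hkn : k ≤ n := Nat.lt_succ_iff.mp (Finset.mem_range.mp hk)
  have h1 : n - (n - k) = k := Nat.sub_sub_self hkn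
  have h2 : n.succ - 1 - k = n - k := by omega
  rw [h2, h1, hGdef, PowerSeries.coeff_mk, ← Polynomial.C_mul, ← Polynomial.C_mul]
  congr 2
  rw [qBinom]
  field_simp
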